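/- Fix a real number σ̃ ≥ 0. For all integers k, l ≥ 2, the sum over m from 2 to max(k,l) of B_{k,m}(σ̃)·B'_{m,l}(σ̃) equals 1 if k = l and equals 0 if k ≠ l (equivalently, the lower-triangular matrices B(σ̃) and B'(σ̃) are two-sided inverses of each other). -/

import Mathlib

open Real Finset

/-- The matrix `B(σ̃)`: `B_{k,l} = (k!/l!)·C(k−1,l−1)·Γ(σ̃+2l)/Γ(σ̃+k+l)`. -/
noncomputable def Bmat (σ : ℝ) (k l : ℕ) : ℝ :=
  ((Nat.factorial k : ℝ) / (Nat.factorial l : ℝ)) * (Nat.choose (k - 1) (l - 1) : ℝ) *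
    Real.Gamma (σ + 2 * l) / Real.Gamma (σ + k + l)

/-- The matrix `B'(σ̃)`: `B'_{k,l} = (−1)^{k+l}·(k!/l!)·C(k−1,l−1)·Γ(σ̃+k+l−1)/Γ(σ̃+2k−1)`. -/
noncomputable def Bmat' (σ : ℝ) (k l : ℕ) : ℝ :=
  (-1 : ℝ) ^ (k + l) * ((Nat.factorial k : ℝ) / (Nat.factorial l : ℝ)) *
    (Nat.choose (k - 1) (l - 1) : ℝ) *
    Real.Gamma (σ + k + l - 1) / Real.Gamma (σ + 2 * k - 1)


lemma gamma_sum (s : ℕ) (hs : 1 ≤ s) : ∀ (n : ℕ) (x : ℝ), 0 < x →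
    ∑ j ∈ Finset.range (n + 1),
        (-1 : ℝ) ^ j * (n.choose j : ℝ) * Real.Gamma (x + j) / Real.Gamma (x + j + s)
      = Real.Gamma x * Real.Gamma (n + s) / (Real.Gamma (x + n + s) * Real.Gamma s) := by
  intro n
  induction n with
  | zero =>
    intro x hx
    have hs0 : (0:ℝ) < s := by exact_mod_cast hs
    have h1 : Real.Gamma (s:ℝ) ≠ 0 := (Real.Gamma_pos_of_pos hs0).ne'
    have h2 : Real.Gamma (x + s) ≠ 0 := (Real.Gamma_pos_of_pos (by linarith)).ne'
    simp only [Finset.range_one, Finset.sum_singleton, Nat.choose_self, pow_zero,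
      Nat.cast_zero, Nat.cast_one, add_zero, zero_add, one_mul]
    field_simp
  | succ n ih =>
    intro x hx
    have hx1 : (0:ℝ) < x + 1 := by linarith
    set g : ℕ → ℝ := fun j => (-1 : ℝ) ^ j * (n.choose j : ℝ) * Real.Gamma (x + j) / Real.Gamma (x + j + s) with hg
    have hsplit : ∀ i ∈ Finset.range (n + 1),
        (-1 : ℝ) ^ (i+1) * ((n+1).choose (i+1) : ℝ) * Real.Gamma (x + (i+1:ℕ)) / Real.Gamma (x + (i+1:ℕ) + s)
          = g (i+1)
            + (-1) * ((-1 : ℝ) ^ i * ((n).choose i : ℝ) * Real.Gamma ((x+1) + i) / Real.Gamma ((x+1) + i + s)) := by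
      intro i _
      rw [Nat.choose_succ_succ']
      simp only [hg]
      push_cast
      ring_nf
    have e2 : ∑ i ∈ Finset.range (n+1), g (i+1) = (∑ j ∈ Finset.range (n + 1), g j) - g 0 := by
      have e4 := Finset.sum_range_succ (fun i => g (i+1)) n
      have hgtop : g (n+1) = 0 := by simp [hg, Nat.choose_succ_self]
      rw [hgtop, add_zero] at e4
      have e3 := Finset.sum_range_succ' g n
      rw [← e4] at e3
      linarith [e3]
    have e1 : ∑ j ∈ Finset.range (n + 1 + 1),
        (-1 : ℝ) ^ j * ((n+1).choose j : ℝ) * Real.Gamma (x + j) / Real.Gamma (x + j + s)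
        = (∑ j ∈ Finset.range (n + 1), g j)
          - ∑ j ∈ Finset.range (n + 1),
            (-1 : ℝ) ^ j * (n.choose j : ℝ) * Real.Gamma ((x+1) + j) / Real.Gamma ((x+1) + j + s) := by
      rw [Finset.sum_range_succ' (fun j => (-1 : ℝ) ^ j * ((n+1).choose j : ℝ) * Real.Gamma (x + j) / Real.Gamma (x + j + s)) (n+1)]
      rw [Finset.sum_congr rfl hsplit, Finset.sum_add_distrib, ← Finset.mul_sum, e2]
      have hg0 : g 0 = (-1 : ℝ) ^ 0 * ((n+1).choose 0 : ℝ) * Real.Gamma (x + (0:ℕ)) / Real.Gamma (x + (0:ℕ) + s) := by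
        simp [hg]
      rw [← hg0]
      ring
    rw [e1, ih x hx, ih (x+1) hx1]
    -- now pure Gamma algebra
    have hns : (0:ℝ) < (n:ℝ) + s := by
      have : (1:ℝ) ≤ s := by exact_mod_cast hs
      positivity
    have hxns : (0:ℝ) < x + n + s := by positivity
    have hGs : Real.Gamma (s:ℝ) ≠ 0 := (Real.Gamma_pos_of_pos (by exact_mod_cast hs)).ne'
    have hGxns : Real.Gamma (x + n + s) ≠ 0 := (Real.Gamma_pos_of_pos hxns).ne'
    have hGxns1 : Real.Gamma (x + (n+1:ℝ) + s) ≠ 0 := (Real.Gamma_pos_of_pos (by linarith)).ne'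
    have g1 : Real.Gamma (x + 1) = x * Real.Gamma x := Real.Gamma_add_one hx.ne'
    have g2 : Real.Gamma ((n:ℝ) + 1 + s) = ((n:ℝ) + s) * Real.Gamma ((n:ℝ) + s) := by
      rw [show (n:ℝ) + 1 + s = ((n:ℝ) + s) + 1 by ring, Real.Gamma_add_one hns.ne']
    have g3 : Real.Gamma (x + ((n:ℝ)+1) + s) = (x + n + s) * Real.Gamma (x + (n:ℝ) + s) := by
      rw [show x + ((n:ℝ)+1) + s = (x + (n:ℝ) + s) + 1 by ring, Real.Gamma_add_one hxns.ne']
    have g4 : Real.Gamma (x + 1 + (n:ℝ) + s) = (x + n + s) * Real.Gamma (x + (n:ℝ) + s) := by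
      rw [show x + 1 + (n:ℝ) + s = (x + (n:ℝ) + s) + 1 by ring, Real.Gamma_add_one hxns.ne']
    push_cast
    rw [g1, g2, g3, g4]
    field_simp
    ring

lemma inner_zero (m : ℕ) (x : ℝ) (hx : 0 < x) :
    ∑ j ∈ Finset.range (m + 2),
        (-1 : ℝ) ^ j * ((m+1).choose j : ℝ) * (x + 2*j) * Real.Gamma (x + j)
          / Real.Gamma (x + (m+1) + j + 1) = 0 := by
  have hx1 : (0:ℝ) < x + 1 := by linarith
  -- split each term
  have hsplit : ∀ j ∈ Finset.range (m + 2),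
      (-1 : ℝ) ^ j * ((m+1).choose j : ℝ) * (x + 2*j) * Real.Gamma (x + j)
          / Real.Gamma (x + (m+1) + j + 1)
        = (-1 : ℝ) ^ j * ((m+1).choose j : ℝ) * Real.Gamma ((x+1) + j) / Real.Gamma ((x+1) + j + (m+1))
          + (-1 : ℝ) ^ j * ((m+1).choose j : ℝ) * (j:ℝ) * Real.Gamma (x + j) / Real.Gamma (x + (m+1) + j + 1) := by
    intro j _
    have hxj : (0:ℝ) < x + j := by positivity
    have e : Real.Gamma ((x+1) + j) = (x + j) * Real.Gamma (x + j) := by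
      rw [show (x+1) + (j:ℝ) = (x + j) + 1 by ring, Real.Gamma_add_one hxj.ne']
    rw [e, show (x+1) + (j:ℝ) + ((m:ℝ)+1) = x + ((m:ℝ)+1) + j + 1 by ring]
    ring
  rw [Finset.sum_congr rfl hsplit, Finset.sum_add_distrib]
  -- first sum via gamma_sum with s = m+1, n = m+1, base x+1
  have h1 : ∑ j ∈ Finset.range (m + 2),
      (-1 : ℝ) ^ j * ((m+1).choose j : ℝ) * Real.Gamma ((x+1) + j) / Real.Gamma ((x+1) + j + (m+1))
      = Real.Gamma (x+1) * Real.Gamma ((m+1:ℝ) + (m+1)) / (Real.Gamma ((x+1) + (m+1) + (m+1)) * Real.Gamma ((m+1:ℝ))) := by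
    have := gamma_sum (m+1) (by omega) (m+1) (x+1) hx1
    push_cast at this ⊢
    convert this using 2
  -- second sum: reindex and use gamma_sum with s = m+2, n = m, base x+1
  have h2 : ∑ j ∈ Finset.range (m + 2),
      (-1 : ℝ) ^ j * ((m+1).choose j : ℝ) * (j:ℝ) * Real.Gamma (x + j) / Real.Gamma (x + (m+1) + j + 1)
      = -((m:ℝ)+1) * (Real.Gamma (x+1) * Real.Gamma ((m:ℝ) + (m+2)) / (Real.Gamma ((x+1) + (m:ℝ) + (m+2)) * Real.Gamma ((m:ℝ)+2))) := by
    rw [Finset.sum_range_succ' (fun j => (-1 : ℝ) ^ j * ((m+1).choose j : ℝ) * (j:ℝ) * Real.Gamma (x + j) / Real.Gamma (x + (m+1) + j + 1)) (m+1)]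
    have hre : ∀ i ∈ Finset.range (m+1),
        (-1 : ℝ) ^ (i+1) * ((m+1).choose (i+1) : ℝ) * ((i+1:ℕ):ℝ) * Real.Gamma (x + (i+1:ℕ)) / Real.Gamma (x + (m+1) + (i+1:ℕ) + 1)
        = (-((m:ℝ)+1)) * ((-1 : ℝ) ^ i * ((m).choose i : ℝ) * Real.Gamma ((x+1) + i) / Real.Gamma ((x+1) + i + (m+2))) := by
      intro i _
      have hc : ((m+1).choose (i+1) : ℝ) * ((i:ℝ)+1) = ((m:ℝ)+1) * (m.choose i : ℝ) := by
        have := Nat.add_one_mul_choose_eq m i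
        have := congrArg (Nat.cast : ℕ → ℝ) this
        push_cast at this
        linarith
      have e1 : Real.Gamma (x + ((i:ℝ)+1)) = Real.Gamma ((x+1) + i) := by ring_nf
      have e2 : Real.Gamma (x + ((m:ℝ)+1) + ((i:ℝ)+1) + 1) = Real.Gamma ((x+1) + i + ((m:ℝ)+2)) := by ring_nf
      push_cast
      rw [e1, e2]
      linear_combination (-(-1:ℝ)^i * Real.Gamma (x+1+(i:ℝ)) / Real.Gamma (x+1+(i:ℝ)+((m:ℝ)+2))) * hc
    rw [Finset.sum_congr rfl hre, ← Finset.mul_sum]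
    have := gamma_sum (m+2) (by omega) m (x+1) hx1
    push_cast at this
    rw [this]
    push_cast
    simp
  rw [h1, h2]
  -- final: Γ(m+2) = (m+1)Γ(m+1)
  have hm1 : (0:ℝ) < (m:ℝ) + 1 := by positivity
  have g5 : Real.Gamma ((m:ℝ) + 2) = ((m:ℝ)+1) * Real.Gamma ((m:ℝ)+1) := by
    rw [show (m:ℝ) + 2 = ((m:ℝ) + 1) + 1 by ring, Real.Gamma_add_one hm1.ne']
  have e6 : Real.Gamma ((m:ℝ) + ((m:ℝ)+2)) = Real.Gamma ((m:ℝ)+1 + ((m:ℝ)+1)) := by ring_nf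
  have e7 : Real.Gamma ((x+1) + (m:ℝ) + ((m:ℝ)+2)) = Real.Gamma ((x+1) + ((m:ℝ)+1) + ((m:ℝ)+1)) := by ring_nf
  rw [g5, e6, e7]
  have hGm1 : Real.Gamma ((m:ℝ)+1) ≠ 0 := (Real.Gamma_pos_of_pos hm1).ne'
  have hGx : Real.Gamma ((x+1) + ((m:ℝ)+1) + ((m:ℝ)+1)) ≠ 0 := (Real.Gamma_pos_of_pos (by linarith)).ne'
  field_simp
  ring

lemma choose_trinomial (a b c : ℕ) (h1 : c ≤ b) (h2 : b ≤ a) :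
    (a.choose b : ℝ) * (b.choose c : ℝ) = (a.choose c : ℝ) * ((a - c).choose (b - c) : ℝ) := by
  rw [Nat.cast_choose ℝ h2, Nat.cast_choose ℝ h1, Nat.cast_choose ℝ (h1.trans h2),
    Nat.cast_choose ℝ (by omega : b - c ≤ a - c)]
  rw [show a - c - (b - c) = a - b by omega]
  have f1 : ((b.factorial : ℝ)) ≠ 0 := Nat.cast_ne_zero.mpr b.factorial_ne_zero
  have f2 : (((a-b).factorial : ℝ)) ≠ 0 := Nat.cast_ne_zero.mpr (a-b).factorial_ne_zero
  have f3 : ((c.factorial : ℝ)) ≠ 0 := Nat.cast_ne_zero.mpr c.factorial_ne_zero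
  have f4 : (((b-c).factorial : ℝ)) ≠ 0 := Nat.cast_ne_zero.mpr (b-c).factorial_ne_zero
  have f5 : (((a-c).factorial : ℝ)) ≠ 0 := Nat.cast_ne_zero.mpr (a-c).factorial_ne_zero
  field_simp


/-- For `σ̃ ≥ 0` and `k, l ≥ 2`, `∑_{m=2}^{max(k,l)} B_{k,m}(σ̃)·B'_{m,l}(σ̃)` is `1` if
`k = l` and `0` otherwise: the lower-triangular matrices `B(σ̃)` and `B'(σ̃)` are
two-sided inverses of each other. -/
theorem Bmat_mul_Bmat'_eq_delta (σ : ℝ) (hσ : 0 ≤ σ) (k l : ℕ) (hk : 2 ≤ k) (hl : 2 ≤ l) :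
    ∑ m ∈ Finset.Icc 2 (max k l), Bmat σ k m * Bmat' σ m l
      = if k = l then (1 : ℝ) else 0 := by
  rcases lt_trichotomy k l with hlt | heq | hgt
  · -- k < l : all terms vanish
    rw [if_neg (by omega), max_eq_right hlt.le]
    apply Finset.sum_eq_zero
    intro m hm
    simp only [Finset.mem_Icc] at hm
    rcases le_or_gt m k with h | h
    · have hc : (m-1).choose (l-1) = 0 := Nat.choose_eq_zero_of_lt (by omega)
      simp [Bmat', hc]
    · have hc : (k-1).choose (m-1) = 0 := Nat.choose_eq_zero_of_lt (by omega)
      simp [Bmat, hc]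
  · -- k = l : single diagonal term
    subst heq
    rw [if_pos rfl, max_self]
    rw [Finset.sum_eq_single_of_mem k (by simp [Finset.mem_Icc]; omega)
      (fun m hm hne => by
        simp only [Finset.mem_Icc] at hm
        have hc : (m-1).choose (k-1) = 0 := Nat.choose_eq_zero_of_lt (by omega)
        simp [Bmat', hc])]
    have hk0 : (0:ℝ) < (k:ℝ) := by positivity
    have hk2 : (2:ℝ) ≤ (k:ℝ) := by exact_mod_cast hk
    have hG1 : Real.Gamma (σ + 2*(k:ℝ)) ≠ 0 := (Real.Gamma_pos_of_pos (by linarith)).ne'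
    have hG2 : Real.Gamma (σ + 2*(k:ℝ) - 1) ≠ 0 := (Real.Gamma_pos_of_pos (by linarith)).ne'
    have hf : ((k.factorial : ℝ)) ≠ 0 := Nat.cast_ne_zero.mpr k.factorial_ne_zero
    unfold Bmat Bmat'
    rw [show σ + (k:ℝ) + (k:ℝ) = σ + 2*(k:ℝ) by ring, Nat.choose_self, Even.neg_one_pow ⟨k, rfl⟩]
    field_simp
    simp
  · -- k > l : reindex and apply inner_zero
    rw [if_neg (by omega), max_eq_left hgt.le]
    -- restrict to Icc l k
    rw [← Finset.sum_subset (Finset.Icc_subset_Icc_left hl) (fun m hm hnot => by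
      simp only [Finset.mem_Icc] at hm hnot
      have hc : (m-1).choose (l-1) = 0 := Nat.choose_eq_zero_of_lt (by omega)
      simp [Bmat', hc])]
    rw [← Finset.Ico_add_one_right_eq_Icc, Finset.sum_Ico_eq_sum_range]
    obtain ⟨m, hmk⟩ : ∃ m, k - l = m + 1 := ⟨k - l - 1, by omega⟩
    have hkl : k = l + (m + 1) := by omega
    rw [show k + 1 - l = m + 2 by omega]
    set x : ℝ := σ + 2*l - 1 with hxdef
    have hl2 : (2:ℝ) ≤ (l:ℝ) := by exact_mod_cast hl
    have hx : 0 < x := by rw [hxdef]; linarith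
    have hterm : ∀ j ∈ Finset.range (m + 2),
        Bmat σ k (l + j) * Bmat' σ (l + j) l
          = ((k.factorial : ℝ) / (l.factorial : ℝ) * ((k-1).choose (l-1) : ℝ)) *
            ((-1 : ℝ) ^ j * ((m+1).choose j : ℝ) * (x + 2*j) * Real.Gamma (x + j)
              / Real.Gamma (x + (m+1) + j + 1)) := by
      intro j hj
      simp only [Finset.mem_range] at hj
      unfold Bmat Bmat'
      have hch : ((k-1).choose (l+j-1) : ℝ) * ((l+j-1).choose (l-1) : ℝ)
          = ((k-1).choose (l-1) : ℝ) * ((m+1).choose j : ℝ) := by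
        have := choose_trinomial (k-1) (l+j-1) (l-1) (by omega) (by omega)
        rw [this, show k-1-(l-1) = m+1 by omega, show l+j-1-(l-1) = j by omega]
      -- Gamma rewrites
      have hx2j : (0:ℝ) < x + 2*j := by positivity
      have hGpos : Real.Gamma (x + 2*(j:ℝ)) ≠ 0 := (Real.Gamma_pos_of_pos hx2j).ne'
      have e1 : Real.Gamma (σ + 2 * ((l+j : ℕ) : ℝ)) = (x + 2*j) * Real.Gamma (x + 2*j) := by
        rw [show σ + 2 * ((l+j : ℕ) : ℝ) = (x + 2*(j:ℝ)) + 1 by rw [hxdef]; push_cast; ring,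
          Real.Gamma_add_one hx2j.ne']
      have e2 : Real.Gamma (σ + 2 * ((l+j : ℕ) : ℝ) - 1) = Real.Gamma (x + 2*j) := by
        congr 1; rw [hxdef]; push_cast; ring
      have e3 : Real.Gamma (σ + ((l+j : ℕ) : ℝ) + l - 1) = Real.Gamma (x + j) := by
        congr 1; rw [hxdef]; push_cast; ring
      have e4 : Real.Gamma (σ + (k:ℝ) + ((l+j : ℕ) : ℝ)) = Real.Gamma (x + ((m:ℝ)+1) + j + 1) := by
        congr 1
        rw [hxdef]
        have : (k:ℝ) = (l:ℝ) + (m:ℝ) + 1 := by exact_mod_cast congrArg (Nat.cast : ℕ → ℝ) hkl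
        push_cast
        rw [this]; ring
      rw [e1, e2, e3, e4]
      -- sign
      have esign : (-1 : ℝ) ^ (l + j + l) = (-1 : ℝ) ^ j := by
        rw [show l + j + l = j + 2*l by ring, pow_add, pow_mul]
        norm_num
      rw [esign]
      have hfl : ((l.factorial : ℝ)) ≠ 0 := Nat.cast_ne_zero.mpr l.factorial_ne_zero
      have hflj : (((l+j).factorial : ℝ)) ≠ 0 := Nat.cast_ne_zero.mpr (l+j).factorial_ne_zero
      have hGd : Real.Gamma (x + ((m:ℝ)+1) + j + 1) ≠ 0 :=
        (Real.Gamma_pos_of_pos (by positivity)).ne'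
      calc ((k.factorial : ℝ) / ((l+j).factorial : ℝ)) * ((k-1).choose (l+j-1) : ℝ) *
              ((x + 2*j) * Real.Gamma (x + 2*j)) / Real.Gamma (x + ((m:ℝ)+1) + j + 1) *
            ((-1 : ℝ) ^ j * (((l+j).factorial : ℝ) / (l.factorial : ℝ)) * ((l+j-1).choose (l-1) : ℝ) *
              Real.Gamma (x + j) / Real.Gamma (x + 2*j))
          = (((k-1).choose (l+j-1) : ℝ) * ((l+j-1).choose (l-1) : ℝ)) *
              ((k.factorial : ℝ) / (l.factorial : ℝ) * ((-1 : ℝ) ^ j * (x + 2*j) * Real.Gamma (x + j)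
                / Real.Gamma (x + ((m:ℝ)+1) + j + 1))) := by
            field_simp
        _ = (((k-1).choose (l-1) : ℝ) * ((m+1).choose j : ℝ)) *
              ((k.factorial : ℝ) / (l.factorial : ℝ) * ((-1 : ℝ) ^ j * (x + 2*j) * Real.Gamma (x + j)
                / Real.Gamma (x + ((m:ℝ)+1) + j + 1))) := by rw [hch]
        _ = _ := by ring
    rw [Finset.sum_congr rfl hterm, ← Finset.mul_sum, inner_zero m x hx, mul_zero]
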